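/- For natural numbers m < n, (B^m B) ∘ (B^n B) is βη-equivalent to (B^{n+1} B) ∘ (B^m B), where e1 ∘ e2 denotes B e1 e2 and B^k denotes k-fold application B(B(...(B ·))). -/

import Mathlib

/-- Untyped lambda terms in de Bruijn representation. -/
inductive Lam where
  | var : Nat → Lam
  | app : Lam → Lam → Lam
  | lam : Lam → Lam
deriving DecidableEq

namespace Lam

/-- Lift (shift by one) all free variables with index ≥ `c`. -/
def lift (c : Nat) : Lam → Lam
  | var n => if n < c then var n else var (n + 1)
  | app a b => app (lift c a) (lift c b)
  | lam a => lam (lift (c + 1) a)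

/-- Substitute `s` for the free variable with index `d`. -/
def subst (d : Nat) (s : Lam) : Lam → Lam
  | var n => if n = d then s else if d < n then var (n - 1) else var n
  | app a b => app (subst d s a) (subst d s b)
  | lam a => lam (subst (d + 1) (lift 0 s) a)

/-- One-step βη-reduction (compatible closure of β and η). -/
inductive Step : Lam → Lam → Prop
  | beta (a b : Lam) : Step (app (lam a) b) (subst 0 b a)
  | eta (a : Lam) : Step (lam (app (lift 0 a) (var 0))) a
  | appL {a a' : Lam} (b : Lam) : Step a a' → Step (app a b) (app a' b)
  | appR (a : Lam) {b b' : Lam} : Step b b' → Step (app a b) (app a b')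
  | xi {a a' : Lam} : Step a a' → Step (lam a) (lam a')

/-- βη-equivalence: the equivalence relation generated by one-step βη-reduction. -/
def BetaEtaEq (a b : Lam) : Prop := Relation.EqvGen Step a b

/-- The B combinator λf.λg.λx. f (g x). -/
def B : Lam := lam (lam (lam (app (var 2) (app (var 1) (var 0)))))

/-- `flat X n` is the (n+1)-fold flat left application, i.e. `X_(n+1)`:
`flat X 0 = X = X_(1)` and `flat X (n+1) = (flat X n) X = X_(n+2)`. -/
def flat (X : Lam) : Nat → Lam
  | 0 => X
  | n + 1 => app (flat X n) X

end Lam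

open Lam

/-- `bpow k e` is the k-fold application B (B (… (B e)…)). -/
def bpow : ℕ → Lam → Lam
  | 0, e => e
  | k + 1, e => app B (bpow k e)

/-- Composition e1 ∘ e2 = B e1 e2. -/
def comp (a b : Lam) : Lam := app (app B a) b

namespace Lam

/-! ### Substitution / lifting lemmas -/

lemma lift_lift (t : Lam) : ∀ c c', c ≤ c' →
    lift c (lift c' t) = lift (c' + 1) (lift c t) := by
  induction t with
  | var n =>
      intro c c' h
      simp only [lift]
      by_cases h1 : n < c'
      · by_cases h2 : n < c
        · simp [lift, h1, h2, Nat.lt_succ_of_lt h1, Nat.lt_of_lt_of_le h2 h]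
        · simp only [lift, if_neg h2]
          rw [if_pos h1, if_pos (by omega : n + 1 < c' + 1)]
          simp [lift, h2]
      · have h2 : ¬ n < c := by omega
        simp only [lift, if_neg h2, if_neg h1]
        rw [if_neg (by omega : ¬ n + 1 < c), if_neg (by omega : ¬ n + 1 < c' + 1)]
  | app a b iha ihb =>
      intro c c' h
      simp [lift, iha c c' h, ihb c c' h]
  | lam a ih =>
      intro c c' h
      simp [lift, ih (c + 1) (c' + 1) (by omega)]

lemma subst_lift (t : Lam) : ∀ d s, subst d s (lift d t) = t := by
  induction t with
  | var n =>
      intro d s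
      by_cases h : n < d
      · simp only [lift, if_pos h, subst]
        rw [if_neg (by omega : ¬ n = d), if_neg (by omega : ¬ d < n)]
      · simp only [lift, if_neg h, subst]
        rw [if_neg (by omega : ¬ n + 1 = d), if_pos (by omega : d < n + 1)]
        simp
  | app a b iha ihb =>
      intro d s
      simp [lift, subst, iha, ihb]
  | lam a ih =>
      intro d s
      simp [lift, subst, ih]

lemma lift_B (c : Nat) : lift c B = B := by
  simp [B, lift]

lemma lift_app (c : Nat) (a b : Lam) : lift c (app a b) = app (lift c a) (lift c b) := rfl

lemma lift_var0 (n : Nat) : lift 0 (var n) = var (n + 1) := by simp [lift]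

/-! ### Equivalence-relation and congruence lemmas -/

lemma eqv_refl (a : Lam) : BetaEtaEq a a := Relation.EqvGen.refl a

lemma eqv_symm {a b : Lam} (h : BetaEtaEq a b) : BetaEtaEq b a :=
  Relation.EqvGen.symm a b h

lemma eqv_trans {a b c : Lam} (h1 : BetaEtaEq a b) (h2 : BetaEtaEq b c) :
    BetaEtaEq a c := Relation.EqvGen.trans a b c h1 h2

lemma eqv_of_step {a b : Lam} (h : Step a b) : BetaEtaEq a b :=
  Relation.EqvGen.rel a b h

lemma eqv_map {f : Lam → Lam} (hf : ∀ {x y}, Step x y → Step (f x) (f y))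
    {a b : Lam} (h : BetaEtaEq a b) : BetaEtaEq (f a) (f b) := by
  induction h with
  | rel x y hxy => exact Relation.EqvGen.rel _ _ (hf hxy)
  | refl x => exact Relation.EqvGen.refl _
  | symm x y _ ih => exact Relation.EqvGen.symm _ _ ih
  | trans x y z _ _ ih1 ih2 => exact Relation.EqvGen.trans _ _ _ ih1 ih2

lemma lam_congr {a b : Lam} (h : BetaEtaEq a b) : BetaEtaEq (lam a) (lam b) :=
  eqv_map (fun hs => Step.xi hs) h

lemma app_congr {a a' b b' : Lam} (ha : BetaEtaEq a a') (hb : BetaEtaEq b b') :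
    BetaEtaEq (app a b) (app a' b') :=
  eqv_trans (eqv_map (fun hs => Step.appL b hs) ha)
    (eqv_map (fun hs => Step.appR a' hs) hb)

lemma appL_congr {a a' : Lam} (b : Lam) (ha : BetaEtaEq a a') :
    BetaEtaEq (app a b) (app a' b) := app_congr ha (eqv_refl b)

lemma appR_congr (a : Lam) {b b' : Lam} (hb : BetaEtaEq b b') :
    BetaEtaEq (app a b) (app a b') := app_congr (eqv_refl a) hb

/-- Extensionality through η. -/
lemma ext {X Y : Lam}
    (h : BetaEtaEq (app (lift 0 X) (var 0)) (app (lift 0 Y) (var 0))) :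
    BetaEtaEq X Y :=
  eqv_trans (eqv_symm (eqv_of_step (Step.eta X)))
    (eqv_trans (lam_congr h) (eqv_of_step (Step.eta Y)))

/-! ### The key reduction for B -/

/-- `B f g x ≈ f (g x)`. -/
lemma B_red (f g x : Lam) :
    BetaEtaEq (app (app (app B f) g) x) (app f (app g x)) := by
  have h1 : Step (app B f)
      (lam (lam (app (lift 0 (lift 0 f)) (app (var 1) (var 0))))) := by
    have := Step.beta (lam (lam (app (var 2) (app (var 1) (var 0))))) f
    simpa [subst, B] using this
  have h2 : Step (app (lam (lam (app (lift 0 (lift 0 f)) (app (var 1) (var 0))))) g)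
      (lam (app (lift 0 f) (app (lift 0 g) (var 0)))) := by
    have := Step.beta (lam (app (lift 0 (lift 0 f)) (app (var 1) (var 0)))) g
    simpa [subst, lift_lift f 0 0 (le_refl 0), subst_lift] using this
  have h3 : Step (app (lam (app (lift 0 f) (app (lift 0 g) (var 0)))) x)
      (app f (app g x)) := by
    have := Step.beta (app (lift 0 f) (app (lift 0 g) (var 0))) x
    simpa [subst, subst_lift] using this
  exact eqv_trans
    (appL_congr x (eqv_trans (appL_congr g (eqv_of_step h1)) (eqv_of_step h2)))
    (eqv_of_step h3)

end Lam

lemma comp_red (a b x : Lam) :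
    BetaEtaEq (app (comp a b) x) (app a (app b x)) := B_red a b x

/-- Associativity of composition. -/
lemma comp_assoc (a b c : Lam) :
    BetaEtaEq (comp (comp a b) c) (comp a (comp b c)) := by
  apply Lam.ext
  simp only [comp, lift_app, lift_B]
  set a' := lift 0 a
  set b' := lift 0 b
  set c' := lift 0 c
  have hL : BetaEtaEq (app (app (app B (app (app B a') b')) c') (var 0))
      (app a' (app b' (app c' (var 0)))) :=
    Lam.eqv_trans (B_red _ _ _) (B_red a' b' (app c' (var 0)))
  have hR : BetaEtaEq (app (app (app B a') (app (app B b') c')) (var 0))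
      (app a' (app b' (app c' (var 0)))) :=
    Lam.eqv_trans (B_red _ _ _) (Lam.appR_congr a' (B_red b' c' (var 0)))
  exact Lam.eqv_trans hL (Lam.eqv_symm hR)

lemma lift_bpow (c : Nat) (k : ℕ) : lift c (bpow k B) = bpow k B := by
  induction k with
  | zero => exact lift_B c
  | succ k ih =>
      rw [show lift c (bpow (k + 1) B) = app (lift c B) (lift c (bpow k B)) from rfl,
        lift_B, ih]
      rfl

/-- `B_{m+1} ∘ B_{n+1} ≈ B (B_m ∘ B_n)`. -/
lemma H1 (m n : ℕ) :
    BetaEtaEq (comp (bpow (m + 1) B) (bpow (n + 1) B))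
      (app B (comp (bpow m B) (bpow n B))) := by
  apply Lam.ext
  apply Lam.ext
  simp only [comp, bpow, lift_app, lift_B, lift_bpow, lift_var0]
  set Bm := bpow m B
  set Bn := bpow n B
  have hL : BetaEtaEq
      (app (app (app (app B (app B Bm)) (app B Bn)) (var 1)) (var 0))
      (app Bm (app Bn (app (var 1) (var 0)))) := by
    refine Lam.eqv_trans (Lam.appL_congr (var 0) (B_red _ _ _)) ?_
    refine Lam.eqv_trans (B_red Bm (app (app B Bn) (var 1)) (var 0)) ?_
    exact Lam.appR_congr Bm (B_red Bn (var 1) (var 0))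
  have hR : BetaEtaEq
      (app (app (app B (app (app B Bm) Bn)) (var 1)) (var 0))
      (app Bm (app Bn (app (var 1) (var 0)))) := by
    refine Lam.eqv_trans (B_red _ _ _) ?_
    exact B_red Bm Bn (app (var 1) (var 0))
  exact Lam.eqv_trans hL (Lam.eqv_symm hR)

/-- Base case: `B ∘ B_{n+1} ≈ B_{n+2} ∘ B`. -/
lemma Hbase (n : ℕ) :
    BetaEtaEq (comp (bpow 0 B) (bpow (n + 1) B))
      (comp (bpow (n + 2) B) (bpow 0 B)) := by
  apply Lam.ext
  apply Lam.ext
  simp only [comp, bpow, lift_app, lift_B, lift_bpow, lift_var0]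
  set Bn := bpow n B
  -- LHS (B ∘ (B Bn)) 1 0 ≈ (B (B Bn 1)) 0 = comp (comp Bn 1) 0  (partial)
  have hL : BetaEtaEq
      (app (app (app (app B B) (app B Bn)) (var 1)) (var 0))
      (comp (comp Bn (var 1)) (var 0)) := by
    refine Lam.eqv_trans (Lam.appL_congr (var 0) (B_red B (app B Bn) (var 1))) ?_
    exact Lam.eqv_refl _
  -- RHS ((B (B Bn)) ∘ B) 1 0 ≈ (B (B Bn)) (B 1) 0 ≈ (B Bn) ((B 1) 0)
  have hR : BetaEtaEq
      (app (app (app (app B (app B (app B Bn))) B) (var 1)) (var 0))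
      (comp Bn (comp (var 1) (var 0))) := by
    refine Lam.eqv_trans (Lam.appL_congr (var 0) (B_red (app B (app B Bn)) B (var 1))) ?_
    exact B_red (app B Bn) (app B (var 1)) (var 0)
  exact Lam.eqv_trans hL
    (Lam.eqv_trans (comp_assoc Bn (var 1) (var 0)) (Lam.eqv_symm hR))

/-- Swap rule: for m < n, (B^m B) ∘ (B^n B) is βη-equivalent to (B^{n+1} B) ∘ (B^m B). -/
theorem stmt14 (m n : ℕ) (h : m < n) :
    BetaEtaEq (comp (bpow m B) (bpow n B))
      (comp (bpow (n + 1) B) (bpow m B)) := by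
  induction m generalizing n with
  | zero =>
      obtain ⟨n', rfl⟩ : ∃ n', n = n' + 1 := ⟨n - 1, by omega⟩
      exact Hbase n'
  | succ m ih =>
      obtain ⟨n', rfl⟩ : ∃ n', n = n' + 1 := ⟨n - 1, by omega⟩
      have hmn : m < n' := by omega
      refine Lam.eqv_trans (H1 m n') ?_
      refine Lam.eqv_trans (Lam.appR_congr B (ih n' hmn)) ?_
      exact Lam.eqv_symm (H1 (n' + 1) m)
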